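/- Let n ≥ 1 and α ∈ ℂ, and let C^{(α)} be the n×n complex matrix defined by C^{(α)} = Iₙ − S − α·e₁·eₙᵀ, where S is the subdiagonal shift matrix (S(i,j) = 1 if i = j+1 and 0 otherwise) and e₁, eₙ are the first and last standard basis vectors. Then for every x ∈ ℂ: det(x·Iₙ − C^{(α)}) = (x − 1)ⁿ − (−1)ⁿ·α. -/

import Mathlib

open Matrix

/-- Characteristic polynomial identity for the α-circulant modification
C^{(α)} = Iₙ − S − α e₁ eₙᵀ of the implicit-Euler time-stepping matrix:
det(x Iₙ − C^{(α)}) = (x − 1)ⁿ − (−1)ⁿ α. -/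
theorem alpha_circulant_char_det
    (n : ℕ) (hn : 1 ≤ n) (α : ℂ)
    (S : Matrix (Fin n) (Fin n) ℂ)
    (hS : ∀ i j : Fin n, S i j = if (i : ℕ) = (j : ℕ) + 1 then 1 else 0)
    (E : Matrix (Fin n) (Fin n) ℂ)
    (hE : ∀ i j : Fin n, E i j = if (i : ℕ) = 0 ∧ (j : ℕ) = n - 1 then 1 else 0)
    (C : Matrix (Fin n) (Fin n) ℂ) (hC : C = 1 - S - α • E) (x : ℂ) :
    (x • (1 : Matrix (Fin n) (Fin n) ℂ) - C).det = (x - 1) ^ n - (-1) ^ n * α := by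
  subst hC
  obtain ⟨m, rfl⟩ : ∃ m, n = m + 1 := ⟨n - 1, by omega⟩
  set M : Matrix (Fin (m + 1)) (Fin (m + 1)) ℂ :=
    x • (1 : Matrix (Fin (m + 1)) (Fin (m + 1)) ℂ) - (1 - S - α • E) with hM
  have hMe : ∀ i j : Fin (m + 1), M i j =
      (if (i : ℕ) = (j : ℕ) then (x - 1) else 0)
      + (if (i : ℕ) = (j : ℕ) + 1 then 1 else 0)
      + (if (i : ℕ) = 0 ∧ (j : ℕ) = m then α else 0) := by
    intro i j
    simp only [hM, Matrix.sub_apply, Matrix.smul_apply, Matrix.one_apply, hS i j, hE i j,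
      smul_eq_mul, Nat.add_sub_cancel]
    rcases eq_or_ne i j with h | h
    · have : (i : ℕ) = (j : ℕ) := by rw [h]
      simp [h, this]
      split <;> ring
    · have hij : (i : ℕ) ≠ (j : ℕ) := fun hh => h (Fin.ext hh)
      simp [h, hij]
      split <;> split <;> ring
  rcases Nat.eq_zero_or_pos m with rfl | hm
  · -- n = 1
    rw [Matrix.det_fin_one]
    rw [hMe 0 0]
    norm_num
  · obtain ⟨k, rfl⟩ : ∃ k, m = k + 1 := ⟨m - 1, by omega⟩
    rw [Matrix.det_succ_row_zero]
    have hlast : ((Fin.last (k + 1) : Fin (k + 2)) : ℕ) = k + 1 := rfl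
    -- determinant of the minor at column 0 : lower triangular with diag (x-1)
    have hA : (M.submatrix Fin.succ (Fin.succAbove 0)).det = (x - 1) ^ (k + 1) := by
      have htri : (M.submatrix Fin.succ (Fin.succAbove 0)).BlockTriangular OrderDual.toDual := by
        intro a b hab
        have hab' : (a : ℕ) < (b : ℕ) := hab
        simp only [Matrix.submatrix_apply, Fin.succAbove_zero]
        rw [hMe]
        simp only [Fin.val_succ]
        have h1 : (a : ℕ) + 1 ≠ (b : ℕ) + 1 := by omega
        have h2 : (a : ℕ) + 1 ≠ (b : ℕ) + 1 + 1 := by omega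
        have h3 : (a : ℕ) + 1 ≠ 0 := by omega
        simp [h1, h2, h3, show (a : ℕ) ≠ (b : ℕ) by omega, show (a : ℕ) ≠ (b : ℕ) + 1 by omega]
      rw [Matrix.det_of_lowerTriangular _ htri]
      have : ∀ a : Fin (k + 1), M a.succ a.succ = x - 1 := by
        intro a
        rw [hMe]
        simp only [Fin.val_succ]
        have h2 : (a : ℕ) + 1 ≠ (a : ℕ) + 1 + 1 := by omega
        have h3 : (a : ℕ) + 1 ≠ 0 := by omega
        simp [h2, h3]
      simp [this]
    -- determinant of the minor at column last : upper triangular with diag 1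
    have hB : (M.submatrix Fin.succ (Fin.succAbove (Fin.last (k + 1)))).det = 1 := by
      have htri : (M.submatrix Fin.succ (Fin.succAbove (Fin.last (k + 1)))).BlockTriangular id := by
        intro a b hab
        have hab' : (b : ℕ) < (a : ℕ) := hab
        simp only [Matrix.submatrix_apply, Fin.succAbove_last]
        rw [hMe]
        simp only [Fin.val_succ, Fin.coe_castSucc]
        have h1 : (a : ℕ) + 1 ≠ (b : ℕ) := by omega
        have h2 : (a : ℕ) + 1 ≠ (b : ℕ) + 1 := by omega
        have h3 : (a : ℕ) + 1 ≠ 0 := by omega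
        simp [h1, h2, h3, show (a : ℕ) ≠ (b : ℕ) by omega]
      rw [Matrix.det_of_upperTriangular htri]
      have : ∀ a : Fin (k + 1), M a.succ a.castSucc = 1 := by
        intro a
        rw [hMe]
        simp only [Fin.val_succ, Fin.coe_castSucc]
        have h1 : (a : ℕ) + 1 ≠ (a : ℕ) := by omega
        have h3 : (a : ℕ) + 1 ≠ 0 := by omega
        simp [h1, h3]
      simp [this]
    -- the row-0 entries
    have hrow : ∀ j : Fin (k + 2), M 0 j =
        (if j = 0 then (x - 1) else 0) + (if j = Fin.last (k + 1) then α else 0) := by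
      intro j
      rw [hMe]
      rcases eq_or_ne j 0 with rfl | hj0
      · have : (0 : ℕ) ≠ (k : ℕ) + 1 := by omega
        simp [Fin.ext_iff, this]
      · have hj0' : (j : ℕ) ≠ 0 := fun h => hj0 (Fin.ext h)
        have h1 : (0 : ℕ) ≠ (j : ℕ) := fun h => hj0' h.symm
        have h2 : (0 : ℕ) ≠ (j : ℕ) + 1 := by omega
        rcases eq_or_ne j (Fin.last (k + 1)) with rfl | hjl
        · simp [h1, h2, hj0]
        · have : (j : ℕ) ≠ k + 1 := fun h => hjl (Fin.ext h)
          simp [h1, h2, hj0, hjl, this]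
    rw [Finset.sum_eq_add_of_mem 0 (Fin.last (k + 1)) (Finset.mem_univ _) (Finset.mem_univ _)
      (by simp [Fin.ext_iff]) ?_]
    · rw [hrow 0, hrow (Fin.last (k + 1)), hA, hB, hlast]
      have h0l : (0 : Fin (k + 2)) ≠ Fin.last (k + 1) := by simp [Fin.ext_iff]
      simp only [if_pos rfl, if_neg h0l, if_neg h0l.symm, Fin.val_zero, pow_zero, one_mul, if_true]
      ring
    · intro j _ hj
      rw [hrow j]
      rcases hj with ⟨hj0, hjl⟩
      simp [hj0, hjl]
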